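/- Let G be a finite simple graph with minimum degree strictly greater than 3. Then the line graph L(G) is twin-free, i.e., any two edges of G having the same neighbourhood in L(G) are equal. -/

import Mathlib

private lemma exists_nbr {V : Type*} [Fintype V] [DecidableEq V] (G : SimpleGraph V)
    [DecidableRel G.Adj] (hδ : 3 < G.minDegree) (v p q r : V) :
    ∃ x, G.Adj v x ∧ x ≠ p ∧ x ≠ q ∧ x ≠ r := by
  have h4 : 3 < G.degree v := lt_of_lt_of_le hδ (G.minDegree_le_degree v)
  have : ((G.neighborFinset v) \ {p, q, r}).Nonempty := by
    apply Finset.card_pos.mp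
    have := Finset.le_card_sdiff {p, q, r} (G.neighborFinset v)
    have hc : ({p, q, r} : Finset V).card ≤ 3 := by
      have h1 := Finset.card_insert_le p ({q, r} : Finset V)
      have h2 := Finset.card_insert_le q ({r} : Finset V)
      simp only [Finset.card_singleton] at h2
      omega
    rw [SimpleGraph.card_neighborFinset_eq_degree] at *
    omega
  obtain ⟨x, hx⟩ := this
  simp only [Finset.mem_sdiff, SimpleGraph.mem_neighborFinset, Finset.mem_insert,
    Finset.mem_singleton, not_or] at hx
  exact ⟨x, hx.1, hx.2.1, hx.2.2.1, hx.2.2.2⟩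

/-- If `G` is a finite simple graph with minimum degree strictly greater than `3`, then the
line graph of `G` is twin-free. -/
theorem stmt_3 {V : Type*} [Fintype V] [DecidableEq V] (G : SimpleGraph V)
    [DecidableRel G.Adj] (hδ : 3 < G.minDegree) :
    ∀ e f : G.edgeSet,
      G.lineGraph.neighborSet e = G.lineGraph.neighborSet f → e = f := by
  -- key claim: for edges e f with same neighborhood, any vertex of e is in f
  have key : ∀ (e f : G.edgeSet),
      G.lineGraph.neighborSet e = G.lineGraph.neighborSet f →
      ∀ a b : V, (e : Sym2 V) = s(a, b) → a ∈ (f : Sym2 V) := by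
    rintro ⟨e, he⟩ ⟨f, hf⟩ hN a b hab
    by_contra haf
    induction f with
    | h c d =>
    subst hab
    have hadj : G.Adj a b := he
    obtain ⟨x, hax, hxb, hxc, hxd⟩ := exists_nbr G hδ a b c d
    have hg : s(a, x) ∈ G.edgeSet := hax
    have h1 : G.lineGraph.Adj ⟨s(a,b), he⟩ ⟨s(a,x), hg⟩ := by
      rw [SimpleGraph.lineGraph_adj_iff_exists]
      constructor
      · simp only [ne_eq, Subtype.mk.injEq, Sym2.eq, Sym2.rel_iff', Prod.mk.injEq,
          Prod.swap_prod_mk]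
        rintro (⟨-, rfl⟩ | ⟨rfl, rfl⟩)
        · exact hxb rfl
        · exact G.loopless.irrefl _ hadj
      · exact ⟨a, by simp, by simp⟩
    have h2 : G.lineGraph.Adj ⟨s(c,d), hf⟩ ⟨s(a,x), hg⟩ := by
      have := Set.ext_iff.mp hN ⟨s(a,x), hg⟩
      exact this.mp h1
    rw [SimpleGraph.lineGraph_adj_iff_exists] at h2
    obtain ⟨-, v, hv1, hv2⟩ := h2
    simp only [Sym2.mem_iff] at hv1 hv2
    rcases hv2 with rfl | rfl
    · exact haf (by simpa using hv1)
    · rcases hv1 with rfl | rfl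
      · exact hxc rfl
      · exact hxd rfl
  intro e f hN
  obtain ⟨e, he⟩ := e
  induction e with
  | h a b =>
  have hab : G.Adj a b := he
  have ha : a ∈ (f : Sym2 V) := key ⟨_, he⟩ f hN a b rfl
  have hb : b ∈ (f : Sym2 V) := key ⟨_, he⟩ f hN b a (Sym2.eq_swap) 
  have := (Sym2.mem_and_mem_iff (G.ne_of_adj hab)).mp ⟨ha, hb⟩
  exact Subtype.ext this.symm
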